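/- arXiv:1204.1038 — 2 statements merged into one kernel-verified Lean document; each statement's English description precedes it below -/
import Mathlib

section
/- Let a > 0 and let (u,v) be a solution of the one-dimensional system u'' = u v², v'' = v u², u > 0, v > 0 on ℝ, satisfying u'(x) → a as x → +∞ and v'(x) → −a as x → −∞. Then there exists a constant A > 0 such that |u(x) − a·max(x,0)| + |v(x) − a·max(−x,0)| ≤ A for every x ∈ ℝ. Moreover, the limits lim_{x→+∞} (u(x) − a x) and lim_{x→−∞} (v(x) + a x) exist and are finite. -/
open Filter Set Real

/-- A solution of the one-dimensional system `u'' = u v²`, `v'' = v u²`, `u, v > 0` on `ℝ`. -/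
def IsSol1D (u v : ℝ → ℝ) : Prop :=
  Differentiable ℝ u ∧ Differentiable ℝ (deriv u) ∧
  Differentiable ℝ v ∧ Differentiable ℝ (deriv v) ∧
  (∀ x, 0 < u x) ∧ (∀ x, 0 < v x) ∧
  (∀ x, deriv (deriv u) x = u x * v x ^ 2) ∧
  (∀ x, deriv (deriv v) x = v x * u x ^ 2)

lemma grow_lower (f : ℝ → ℝ) (hf : Differentiable ℝ f) {s c : ℝ}
    (hd : ∀ t, s ≤ t → c ≤ deriv f t) : ∀ x, s ≤ x → f s + c * (x - s) ≤ f x := by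
  intro x hx
  have hdiff : Differentiable ℝ (fun x => f x - c * x) := by fun_prop
  have hder : ∀ t, deriv (fun x => f x - c * x) t = deriv f t - c := by
    intro t
    have : HasDerivAt (fun x => f x - c * x) (deriv f t - c * 1) t :=
      (hf t).hasDerivAt.sub ((hasDerivAt_id t).const_mul c)
    simpa using this.deriv
  have hm : MonotoneOn (fun x => f x - c * x) (Set.Ici s) := by
    apply monotoneOn_of_deriv_nonneg (convex_Ici s) hdiff.continuous.continuousOn
      hdiff.differentiableOn
    intro t ht
    rw [interior_Ici] at ht
    rw [hder]
    linarith [hd t (le_of_lt ht)]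
  have := hm (Set.mem_Ici.2 le_rfl) (Set.mem_Ici.2 hx) hx
  simp only at this
  linarith

lemma grow_upper (f : ℝ → ℝ) (hf : Differentiable ℝ f) {s c : ℝ}
    (hd : ∀ t, s ≤ t → deriv f t ≤ c) : ∀ x, s ≤ x → f x ≤ f s + c * (x - s) := by
  intro x hx
  have hdiff : Differentiable ℝ (fun x => f x - c * x) := by fun_prop
  have hder : ∀ t, deriv (fun x => f x - c * x) t = deriv f t - c := by
    intro t
    have : HasDerivAt (fun x => f x - c * x) (deriv f t - c * 1) t :=
      (hf t).hasDerivAt.sub ((hasDerivAt_id t).const_mul c)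
    simpa using this.deriv
  have hm : AntitoneOn (fun x => f x - c * x) (Set.Ici s) := by
    apply antitoneOn_of_deriv_nonpos (convex_Ici s) hdiff.continuous.continuousOn
      hdiff.differentiableOn
    intro t ht
    rw [interior_Ici] at ht
    rw [hder]
    linarith [hd t (le_of_lt ht)]
  have := hm (Set.mem_Ici.2 le_rfl) (Set.mem_Ici.2 hx) hx
  simp only at this
  linarith

lemma swap_deriv (f : ℝ → ℝ) : deriv (fun x => f (-x)) = fun x => -(deriv f (-x)) :=
  funext fun x => deriv_comp_neg f x

lemma swap_sol {u v : ℝ → ℝ} (h : IsSol1D u v) :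
    IsSol1D (fun x => v (-x)) (fun x => u (-x)) := by
  obtain ⟨hud, hud2, hvd, hvd2, hupos, hvpos, huE, hvE⟩ := h
  have hd1 : Differentiable ℝ (fun x => v (-x)) := hvd.comp differentiable_neg
  have hd2 : Differentiable ℝ (fun x => u (-x)) := hud.comp differentiable_neg
  refine ⟨hd1, ?_, hd2, ?_, fun x => hvpos _, fun x => hupos _, ?_, ?_⟩
  · rw [swap_deriv]
    exact (hvd2.comp differentiable_neg).neg
  · rw [swap_deriv]
    exact (hud2.comp differentiable_neg).neg
  · intro x
    rw [swap_deriv]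
    have : deriv (fun x => -(deriv v (-x))) x = -(deriv (fun x => deriv v (-x)) x) :=
      deriv.neg
    rw [this, deriv_comp_neg (deriv v) x, neg_neg, hvE]
  · intro x
    rw [swap_deriv]
    have : deriv (fun x => -(deriv u (-x))) x = -(deriv (fun x => deriv u (-x)) x) :=
      deriv.neg
    rw [this, deriv_comp_neg (deriv u) x, neg_neg, huE]

lemma swap_tendsto_top {f : ℝ → ℝ} {a : ℝ} (hf : Tendsto (deriv f) atBot (nhds (-a))) :
    Tendsto (deriv (fun x => f (-x))) atTop (nhds a) := by
  rw [swap_deriv]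
  have : Tendsto (fun x : ℝ => deriv f (-x)) atTop (nhds (-a)) :=
    hf.comp tendsto_neg_atTop_atBot
  simpa using this.neg

lemma swap_tendsto_bot {f : ℝ → ℝ} {a : ℝ} (hf : Tendsto (deriv f) atTop (nhds a)) :
    Tendsto (deriv (fun x => f (-x))) atBot (nhds (-a)) := by
  rw [swap_deriv]
  have : Tendsto (fun x : ℝ => deriv f (-x)) atBot (nhds a) :=
    hf.comp tendsto_neg_atBot_atTop
  exact this.neg
lemma sign_v' {a : ℝ} (ha : 0 < a) {u v : ℝ → ℝ} (h : IsSol1D u v)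
    (hu : Tendsto (deriv u) atTop (nhds a)) : ∀ x, deriv v x ≤ 0 := by
  obtain ⟨hud, hud2, hvd, hvd2, hupos, hvpos, huE, hvE⟩ := h
  have mu' : Monotone (deriv u) := monotone_of_deriv_nonneg hud2 fun x => by
    rw [huE]; exact mul_nonneg (hupos x).le (sq_nonneg _)
  have mv' : Monotone (deriv v) := monotone_of_deriv_nonneg hvd2 fun x => by
    rw [hvE]; exact mul_nonneg (hvpos x).le (sq_nonneg _)
  have hua : ∀ x, deriv u x ≤ a := mu'.ge_of_tendsto hu
  by_contra hc
  push_neg at hc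
  obtain ⟨x0, hs⟩ := hc
  set s := deriv v x0 with hsdef
  have h2 : ∀ᶠ x in atTop, a / 2 < deriv u x := hu.eventually (eventually_gt_nhds (by linarith))
  rw [eventually_atTop] at h2
  obtain ⟨x1, hx1⟩ := h2
  have hugrow : ∀ x, x1 ≤ x → u x1 + a / 2 * (x - x1) ≤ u x :=
    grow_lower u hud fun t ht => (hx1 t ht).le
  have hvgrow : ∀ x, x0 ≤ x → v x0 + s * (x - x0) ≤ v x :=
    grow_lower v hvd fun t ht => mv' ht
  set z := max x0 x1 with hz
  set M := a - deriv u z + 1 with hM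
  have hM1 : 1 ≤ M := by have := hua z; simp [hM]; linarith
  set R := max 1 (2 * M / (a * s ^ 2)) with hR
  have hR1 : 1 ≤ R := le_max_left _ _
  have hR2 : 2 * M / (a * s ^ 2) ≤ R := le_max_right _ _
  set y := z + R with hy
  have hyz : z ≤ y := by simp [hy]; linarith
  obtain ⟨ξ, hξmem, hξ⟩ := exists_deriv_eq_slope (deriv u) (show y < y + 1 by linarith)
    hud2.continuous.continuousOn hud2.differentiableOn
  have hξy : y ≤ ξ := hξmem.1.le
  have hξx1 : x1 ≤ ξ := le_trans (le_trans (le_max_right x0 x1) hyz) hξy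
  have hξx0 : x0 ≤ ξ := le_trans (le_trans (le_max_left x0 x1) hyz) hξy
  have huξ : a / 2 * R ≤ u ξ := by
    have := hugrow ξ hξx1
    have h3 : R ≤ ξ - x1 := by
      have : x1 ≤ z := le_max_right x0 x1
      linarith
    nlinarith [hupos x1, ha]
  have hvξ : s * R ≤ v ξ := by
    have := hvgrow ξ hξx0
    have h3 : R ≤ ξ - x0 := by
      have : x0 ≤ z := le_max_left x0 x1
      linarith
    nlinarith [hvpos x0, hs]
  have hMle : M ≤ deriv (deriv u) ξ := by
    rw [huE]
    have hsR : 0 < s * R := by positivity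
    have h4 : (s * R) ^ 2 ≤ v ξ ^ 2 := pow_le_pow_left₀ hsR.le hvξ 2
    have h5 : a / 2 * R * (s * R) ^ 2 ≤ u ξ * v ξ ^ 2 := by
      apply mul_le_mul huξ h4 (sq_nonneg _) (by nlinarith [hupos ξ])
    have h6 : M ≤ a / 2 * R * (s * R) ^ 2 := by
      have hr3 : R ≤ R ^ 3 := by nlinarith [mul_nonneg (mul_nonneg (by linarith : (0:ℝ) ≤ R) (by linarith : (0:ℝ) ≤ R - 1)) (by linarith : (0:ℝ) ≤ R + 1)]
      have h7 : 2 * M ≤ a * s ^ 2 * R := by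
        rw [div_le_iff₀ (by positivity)] at hR2
        linarith
      nlinarith
    linarith
  have hslope : deriv u z + M ≤ deriv u (y + 1) := by
    have hdy : deriv u z ≤ deriv u y := mu' hyz
    have : deriv (deriv u) ξ = deriv u (y + 1) - deriv u y := by
      rw [hξ]; ring_nf
    linarith [hMle, this ▸ hMle]
  have := hua (y + 1)
  simp only [hM] at hslope
  linarith
lemma main_lemma {a : ℝ} (ha : 0 < a) {u v : ℝ → ℝ} (h : IsSol1D u v)
    (hu : Tendsto (deriv u) atTop (nhds a))
    (hv : Tendsto (deriv v) atBot (nhds (-a))) :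
    (∃ C : ℝ, ∀ x, |u x - a * max x 0| ≤ C) ∧
    (∃ L : ℝ, Tendsto (fun x => u x - a * x) atTop (nhds L)) := by
  have hv0 : ∀ x, deriv v x ≤ 0 := sign_v' ha h hu
  have hu0 : ∀ x, 0 ≤ deriv u x := by
    intro x
    have := sign_v' ha (swap_sol h) (swap_tendsto_top hv) (-x)
    rw [swap_deriv u] at this
    simp only [neg_neg] at this
    linarith
  obtain ⟨hud, hud2, hvd, hvd2, hupos, hvpos, huE, hvE⟩ := h
  have mu' : Monotone (deriv u) := monotone_of_deriv_nonneg hud2 fun x => by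
    rw [huE]; exact mul_nonneg (hupos x).le (sq_nonneg _)
  have mv' : Monotone (deriv v) := monotone_of_deriv_nonneg hvd2 fun x => by
    rw [hvE]; exact mul_nonneg (hvpos x).le (sq_nonneg _)
  have hua : ∀ x, deriv u x ≤ a := mu'.ge_of_tendsto hu
  have humono : Monotone u := monotone_of_deriv_nonneg hud hu0
  have hvanti : Antitone v := antitone_of_deriv_nonpos hvd hv0
  set c : ℝ := u 0 with hcdef
  have hcpos : 0 < c := hupos 0
  have hucge : ∀ x, 0 ≤ x → c ≤ u x := fun x hx => humono hx
  -- deriv v tends to 0 at +∞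
  have hbdd : BddAbove (Set.range (deriv v)) := ⟨0, by rintro _ ⟨x, rfl⟩; exact hv0 x⟩
  have hvtop := tendsto_atTop_ciSup mv' hbdd
  have hlam0 : (⨆ x, deriv v x) = 0 := by
    by_contra hne
    have hlamle : (⨆ x, deriv v x) ≤ 0 := ciSup_le hv0
    have hlam : (⨆ x, deriv v x) < 0 := lt_of_le_of_ne hlamle hne
    set lam := ⨆ x, deriv v x with hlamdef
    have hvle : ∀ t, (0:ℝ) ≤ t → deriv v t ≤ lam := fun t _ => le_ciSup hbdd t
    have hXpos : (0:ℝ) ≤ (v 0 + 1) / (-lam) :=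
      (div_pos (by linarith [hvpos 0]) (by linarith : (0:ℝ) < -lam)).le
    have hthis := grow_upper v hvd hvle ((v 0 + 1) / (-lam)) hXpos
    have hlne : lam ≠ 0 := ne_of_lt hlam
    have hkey : lam * ((v 0 + 1) / (-lam)) = -(v 0 + 1) := by
      field_simp [hlne]
    have h9 : lam * ((v 0 + 1) / (-lam) - 0) = -(v 0 + 1) := by rw [sub_zero, hkey]
    rw [h9] at hthis
    linarith [hvpos ((v 0 + 1) / (-lam))]
  rw [hlam0] at hvtop
  -- v tends to 0 at +∞
  have hbddb : BddBelow (Set.range v) := ⟨0, by rintro _ ⟨x, rfl⟩; exact (hvpos x).le⟩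
  have hvlim := tendsto_atTop_ciInf hvanti hbddb
  have hm0 : (⨅ x, v x) = 0 := by
    by_contra hne
    have hm_ge : (0:ℝ) ≤ ⨅ x, v x := le_ciInf fun x => (hvpos x).le
    have hm : 0 < ⨅ x, v x := lt_of_le_of_ne hm_ge (Ne.symm hne)
    set m := ⨅ x, v x with hmdef
    have hvm : ∀ t, m ≤ v t := fun t => ciInf_le hbddb t
    have hd2v : ∀ t, (0:ℝ) ≤ t → m * c ^ 2 ≤ deriv (deriv v) t := by
      intro t ht
      rw [hvE]
      have h1 : c ≤ u t := hucge t ht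
      have h2 : m ≤ v t := hvm t
      have hc2 : c ^ 2 ≤ u t ^ 2 := by nlinarith
      exact mul_le_mul h2 hc2 (by positivity) (hvpos t).le
    have := grow_lower (deriv v) hvd2 hd2v (max 0 ((1 - deriv v 0) / (m * c ^ 2)))
      (le_max_left _ _)
    have hxge : (1 - deriv v 0) / (m * c ^ 2) ≤ max 0 ((1 - deriv v 0) / (m * c ^ 2)) :=
      le_max_right _ _
    rw [div_le_iff₀ (by positivity)] at hxge
    have := hv0 (max 0 ((1 - deriv v 0) / (m * c ^ 2)))
    nlinarith
  rw [hm0] at hvlim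
  -- energy H = v'² - c²v² is nonneg on [0,∞)
  set H : ℝ → ℝ := fun x => (deriv v x) ^ 2 - c ^ 2 * (v x) ^ 2 with hHdef
  have hHderiv : ∀ x, HasDerivAt H
      (2 * deriv v x * deriv (deriv v) x - c ^ 2 * (2 * v x * deriv v x)) x := by
    intro x
    have h1 : HasDerivAt (fun x => (deriv v x) ^ 2) (2 * deriv v x * deriv (deriv v) x) x := by
      have := (hvd2 x).hasDerivAt.fun_pow 2
      simpa [mul_comm, mul_assoc, mul_left_comm] using this
    have h2 : HasDerivAt (fun x => c ^ 2 * (v x) ^ 2) (c ^ 2 * (2 * v x * deriv v x)) x := by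
      have := ((hvd x).hasDerivAt.fun_pow 2).const_mul (c ^ 2)
      refine this.congr_deriv ?_
      push_cast
      ring
    exact h1.sub h2
  have hHdiff : Differentiable ℝ H := fun x => (hHderiv x).differentiableAt
  have hHanti : AntitoneOn H (Set.Ici 0) := by
    apply antitoneOn_of_deriv_nonpos (convex_Ici 0) hHdiff.continuous.continuousOn
      hHdiff.differentiableOn
    intro t ht
    rw [interior_Ici] at ht
    rw [(hHderiv t).deriv, hvE]
    have h1 : c ≤ u t := hucge t ht.le
    have h2 : deriv v t ≤ 0 := hv0 t
    have h3 : 0 < v t := hvpos t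
    have h4 : c ^ 2 ≤ u t ^ 2 := by nlinarith
    nlinarith [mul_nonneg (neg_nonneg.mpr h2) (mul_nonneg h3.le (sub_nonneg.mpr h4))]
  have hHtend : Tendsto H atTop (nhds 0) := by
    have := (hvtop.pow 2).sub ((hvlim.pow 2).const_mul (c ^ 2))
    simpa using this
  have hHnonneg : ∀ x, 0 ≤ x → 0 ≤ H x := by
    intro x hx
    refine le_of_tendsto hHtend ?_
    rw [eventually_atTop]
    exact ⟨x, fun y hy => hHanti (Set.mem_Ici.2 hx) (Set.mem_Ici.2 (hx.trans hy)) hy⟩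
  have hvc : ∀ x, 0 ≤ x → deriv v x ≤ -(c * v x) := by
    intro x hx
    have h1 := hHnonneg x hx
    simp only [hHdef] at h1
    have h2 : deriv v x ≤ 0 := hv0 x
    have h3 : 0 < c * v x := mul_pos hcpos (hvpos x)
    nlinarith [sq_nonneg (deriv v x + c * v x), sq_nonneg (deriv v x - c * v x)]
  -- exponential decay of v on [0,∞)
  have hgderiv : ∀ x, HasDerivAt (fun x => v x * Real.exp (c * x))
      (deriv v x * Real.exp (c * x) + v x * (Real.exp (c * x) * c)) x := by
    intro x
    have he : HasDerivAt (fun x => Real.exp (c * x)) (Real.exp (c * x) * c) x := by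
      have := ((hasDerivAt_id x).const_mul c).exp
      simpa using this
    exact (hvd x).hasDerivAt.mul he
  have hganti : AntitoneOn (fun x => v x * Real.exp (c * x)) (Set.Ici 0) := by
    apply antitoneOn_of_deriv_nonpos (convex_Ici 0)
      (Continuous.continuousOn (Differentiable.continuous (fun x => (hgderiv x).differentiableAt)))
      (Differentiable.differentiableOn (fun x => (hgderiv x).differentiableAt))
    intro t ht
    rw [interior_Ici] at ht
    rw [(hgderiv t).deriv]
    have := hvc t ht.le
    nlinarith [Real.exp_pos (c * t)]
  have hvdecay : ∀ x, 0 ≤ x → v x ≤ v 0 * Real.exp (-(c * x)) := by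
    intro x hx
    have h1 := hganti (Set.mem_Ici.2 le_rfl) (Set.mem_Ici.2 hx) hx
    simp only [mul_zero, Real.exp_zero, mul_one] at h1
    have h2 : Real.exp (-(c * x)) * Real.exp (c * x) = 1 := by
      rw [← Real.exp_add]; simp
    have h5 := mul_le_mul_of_nonneg_right h1 (Real.exp_pos (-(c * x))).le
    have h6 : v x * Real.exp (c * x) * Real.exp (-(c * x)) = v x := by
      rw [mul_assoc, mul_comm (Real.exp (c * x)), h2, mul_one]
    linarith [h5, h6]
  -- bound on u'' on [0,∞)
  set K : ℝ := (u 0 + a / c) * (v 0) ^ 2 with hKdef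
  have hKpos : 0 < K := mul_pos (by nlinarith [hupos 0, div_pos ha hcpos]) (pow_pos (hvpos 0) 2)
  have hupp : ∀ x, 0 ≤ x → u x ≤ u 0 + a * x := by
    intro x hx
    have := grow_upper u hud (fun t _ => hua t) x hx
    simpa using this
  have hxE : ∀ x : ℝ, 0 ≤ x → (u 0 + a * x) * Real.exp (-(c * x)) ≤ u 0 + a / c := by
    intro x hx
    have hE1 : Real.exp (-(c * x)) ≤ 1 := by
      rw [Real.exp_le_one_iff]
      nlinarith
    have h2 : Real.exp (-(c * x)) * Real.exp (c * x) = 1 := by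
      rw [← Real.exp_add]; simp
    have h3 : c * x ≤ Real.exp (c * x) := by linarith [Real.add_one_le_exp (c * x)]
    have h4 : x * Real.exp (-(c * x)) ≤ 1 / c := by
      have h5 : (c * x) * Real.exp (-(c * x)) ≤ Real.exp (c * x) * Real.exp (-(c * x)) :=
        mul_le_mul_of_nonneg_right h3 (Real.exp_pos _).le
      rw [mul_comm (Real.exp (c * x))] at h5
      rw [h2] at h5
      rw [le_div_iff₀ hcpos]
      nlinarith
    have h6 : 0 ≤ Real.exp (-(c * x)) := (Real.exp_pos _).le
    have h7 := mul_le_mul_of_nonneg_left h4 ha.le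
    have h8 := mul_le_mul_of_nonneg_left hE1 (hupos 0).le
    have h9 : (u 0 + a * x) * Real.exp (-(c * x))
        = u 0 * Real.exp (-(c * x)) + a * (x * Real.exp (-(c * x))) := by ring
    have h10 : a * (1 / c) = a / c := by ring
    rw [h9]
    rw [mul_one] at h8
    linarith
  have hu''bd : ∀ x, 0 ≤ x → deriv (deriv u) x ≤ K * Real.exp (-(c * x)) := by
    intro x hx
    rw [huE]
    have h1 : v x ≤ v 0 * Real.exp (-(c * x)) := hvdecay x hx
    have h2 : v x ^ 2 ≤ (v 0 * Real.exp (-(c * x))) ^ 2 :=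
      pow_le_pow_left₀ (hvpos x).le h1 2
    have h3 : u x * v x ^ 2 ≤ (u 0 + a * x) * (v 0 * Real.exp (-(c * x))) ^ 2 := by
      apply mul_le_mul (hupp x hx) h2 (sq_nonneg _) (by nlinarith [hupos 0])
    have h4 := hxE x hx
    have hE := Real.exp_pos (-(c * x))
    calc u x * v x ^ 2 ≤ (u 0 + a * x) * (v 0 * Real.exp (-(c * x))) ^ 2 := h3
      _ ≤ K * Real.exp (-(c * x)) := by
          rw [hKdef]
          nlinarith [mul_le_mul_of_nonneg_right h4
            (mul_nonneg (sq_nonneg (v 0)) hE.le)]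
  -- a - u' ≤ (K/c) exp(-cx) on [0,∞)
  have hexpD : ∀ x : ℝ, HasDerivAt (fun x => Real.exp (-(c * x)))
      (Real.exp (-(c * x)) * (-c)) x := by
    intro x
    have h0 : HasDerivAt (fun x : ℝ => -(c * x)) (-c) x := by
      simpa using ((hasDerivAt_id x).const_mul c).fun_neg
    exact h0.exp
  have hGanti : AntitoneOn (fun x => deriv u x + K / c * Real.exp (-(c * x))) (Set.Ici 0) := by
    have hGd : ∀ x, HasDerivAt (fun x => deriv u x + K / c * Real.exp (-(c * x)))
        (deriv (deriv u) x + K / c * (Real.exp (-(c * x)) * (-c))) x := fun x =>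
      (hud2 x).hasDerivAt.add ((hexpD x).const_mul (K / c))
    apply antitoneOn_of_deriv_nonpos (convex_Ici 0)
      (Continuous.continuousOn (Differentiable.continuous (fun x => (hGd x).differentiableAt)))
      (Differentiable.differentiableOn (fun x => (hGd x).differentiableAt))
    intro t ht
    rw [interior_Ici] at ht
    rw [(hGd t).deriv]
    have h1 := hu''bd t ht.le
    have h2 : K / c * (Real.exp (-(c * t)) * (-c)) = -(K * Real.exp (-(c * t))) := by
      field_simp
    rw [h2]
    linarith
  have hexp0 : Tendsto (fun x : ℝ => Real.exp (-(c * x))) atTop (nhds 0) := by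
    apply Real.tendsto_exp_atBot.comp
    apply tendsto_neg_atTop_atBot.comp
    exact Tendsto.const_mul_atTop hcpos tendsto_id
  have hGlim : Tendsto (fun x => deriv u x + K / c * Real.exp (-(c * x))) atTop (nhds a) := by
    have := hu.add (hexp0.const_mul (K / c))
    simpa using this
  have ha' : ∀ x, 0 ≤ x → a ≤ deriv u x + K / c * Real.exp (-(c * x)) := by
    intro x hx
    refine le_of_tendsto hGlim ?_
    rw [eventually_atTop]
    exact ⟨x, fun y hy => hGanti (Set.mem_Ici.2 hx) (Set.mem_Ici.2 (hx.trans hy)) hy⟩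
  -- u - ax bounded below
  set B : ℝ := u 0 - K / c ^ 2 with hBdef
  have hFmono : MonotoneOn (fun x => u x - a * x - K / c ^ 2 * Real.exp (-(c * x)))
      (Set.Ici 0) := by
    have hFd : ∀ x, HasDerivAt (fun x => u x - a * x - K / c ^ 2 * Real.exp (-(c * x)))
        (deriv u x - a * 1 - K / c ^ 2 * (Real.exp (-(c * x)) * (-c))) x := fun x =>
      (((hud x).hasDerivAt.sub ((hasDerivAt_id x).const_mul a)).sub
        ((hexpD x).const_mul (K / c ^ 2)))
    apply monotoneOn_of_deriv_nonneg (convex_Ici 0)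
      (Continuous.continuousOn (Differentiable.continuous (fun x => (hFd x).differentiableAt)))
      (Differentiable.differentiableOn (fun x => (hFd x).differentiableAt))
    intro t ht
    rw [interior_Ici] at ht
    rw [(hFd t).deriv]
    have h1 := ha' t ht.le
    have h2 : K / c ^ 2 * (Real.exp (-(c * t)) * (-c)) = -(K / c * Real.exp (-(c * t))) := by
      field_simp
    rw [h2]
    linarith
  have hlowbd0 : ∀ x, 0 ≤ x → B ≤ u x - a * x := by
    intro x hx
    have h1 := hFmono (Set.mem_Ici.2 le_rfl) (Set.mem_Ici.2 hx) hx
    simp only [mul_zero, neg_zero, Real.exp_zero, mul_one, sub_zero] at h1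
    have hE := Real.exp_pos (-(c * x))
    have hKc : 0 ≤ K / c ^ 2 := by positivity
    have h11 := mul_nonneg hKc hE.le
    rw [hBdef]
    linarith
  have hlowbd : ∀ x, min B 0 ≤ u x - a * x := by
    intro x
    rcases le_or_gt 0 x with hx | hx
    · exact le_trans (min_le_left _ _) (hlowbd0 x hx)
    · have : 0 ≤ u x - a * x := by nlinarith [hupos x]
      exact le_trans (min_le_right _ _) this
  have hantiU : Antitone (fun x => u x - a * x) := by
    apply antitone_of_deriv_nonpos (by fun_prop)
    intro x
    have : HasDerivAt (fun x => u x - a * x) (deriv u x - a * 1) x :=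
      (hud x).hasDerivAt.sub ((hasDerivAt_id x).const_mul a)
    rw [this.deriv]
    linarith [hua x]
  constructor
  · refine ⟨u 0 + |B|, fun x => ?_⟩
    rcases le_or_gt x 0 with hx | hx
    · rw [max_eq_right hx]
      rw [abs_le]
      constructor
      · nlinarith [hupos x, abs_nonneg B]
      · have := humono hx
        simp only [mul_zero, sub_zero]
        nlinarith [abs_nonneg B]
    · rw [max_eq_left hx.le]
      rw [abs_le]
      constructor
      · have := hlowbd x
        have : -|B| ≤ min B 0 := by
          rcases le_or_gt B 0 with h | h
          · rw [min_eq_left h]; linarith [neg_abs_le B]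
          · rw [min_eq_right h.le]; linarith [abs_nonneg B]
        nlinarith [hlowbd x, hupos 0]
      · have h1 := hantiU hx.le
        simp only [mul_zero, sub_zero] at h1
        nlinarith [abs_nonneg B]
  · refine ⟨⨅ x, u x - a * x, ?_⟩
    have hb : BddBelow (Set.range (fun x => u x - a * x)) :=
      ⟨min B 0, by rintro _ ⟨x, rfl⟩; exact hlowbd x⟩
    exact tendsto_atTop_ciInf hantiU hb
/-- A solution with `u' → a` at `+∞` and `v' → −a` at `−∞` stays at bounded distance from
the profile `(a·x⁺, a·x⁻)`, and the corrections converge at the respective infinities. -/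
theorem linear_asymptotics_1D (a : ℝ) (ha : 0 < a) (u v : ℝ → ℝ) (h : IsSol1D u v)
    (hu : Tendsto (deriv u) atTop (nhds a))
    (hv : Tendsto (deriv v) atBot (nhds (-a))) :
    (∃ A : ℝ, 0 < A ∧
      ∀ x : ℝ, |u x - a * max x 0| + |v x - a * max (-x) 0| ≤ A) ∧
    (∃ L₁ : ℝ, Tendsto (fun x => u x - a * x) atTop (nhds L₁)) ∧
    (∃ L₂ : ℝ, Tendsto (fun x => v x + a * x) atBot (nhds L₂)) := by
  obtain ⟨⟨C₁, hC₁⟩, L₁, hL₁⟩ := main_lemma ha h hu hv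
  obtain ⟨⟨C₂, hC₂⟩, L, hL⟩ :=
    main_lemma ha (swap_sol h) (swap_tendsto_top hv) (swap_tendsto_bot hu)
  refine ⟨⟨|C₁| + |C₂| + 1, by positivity, fun x => ?_⟩, ⟨L₁, hL₁⟩, ⟨L, ?_⟩⟩
  · have h1 := hC₁ x
    have h2 := hC₂ (-x)
    simp only [neg_neg] at h2
    linarith [le_abs_self C₁, le_abs_self C₂]
  · have := hL.comp (tendsto_neg_atBot_atTop : Tendsto (fun y : ℝ => -y) atBot atTop)
    have heq : ((fun x => v (-x) - a * x) ∘ fun y : ℝ => -y) = fun y => v y + a * y := by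
      funext y
      simp [Function.comp, neg_neg]
      try ring
    rwa [heq] at this
end

section
/- Let (u,v) be a solution of the system Δu = u v², Δv = v u², u > 0, v > 0 on ℝ² satisfying the linear growth bound u(x) + v(x) ≤ C₀(1 + |x|) for all x ∈ ℝ² and some constant C₀ > 0. Then there exists a constant C > 0 such that for every r ≥ 1, ∫_{B_r(0)} (|∇u|² + |∇v|²) dx ≤ C r². -/
open MeasureTheory

noncomputable abbrev E2 := EuclideanSpace ℝ (Fin 2)

/-- The Laplacian of `u : ℝ² → ℝ`: the sum of the second partial derivatives. -/
noncomputable def lap (u : E2 → ℝ) (x : E2) : ℝ :=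
  ∑ i : Fin 2, fderiv ℝ (fun y => fderiv ℝ u y (EuclideanSpace.single i 1)) x
      (EuclideanSpace.single i 1)

/-- A solution of the system `Δu = u v²`, `Δv = v u²`, `u, v > 0` on `ℝ²`. -/
def IsSol (u v : E2 → ℝ) : Prop :=
  ContDiff ℝ 2 u ∧ ContDiff ℝ 2 v ∧ (∀ x, 0 < u x) ∧ (∀ x, 0 < v x) ∧
  (∀ x, lap u x = u x * v x ^ 2) ∧ (∀ x, lap v x = v x * u x ^ 2)

section Helpers
open Metric Set

lemma norm_clm_sq (f : E2 →L[ℝ] ℝ) :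
    ‖f‖^2 = ∑ i, (f (EuclideanSpace.single i 1))^2 := by
  set y := (InnerProductSpace.toDual ℝ E2).symm f with hy
  have hf : ∀ z, f z = inner ℝ y z := by
    intro z
    have h1 : InnerProductSpace.toDual ℝ E2 y = f := by simp [hy]
    rw [← h1]; rfl
  have hn : ‖f‖ = ‖y‖ := ((InnerProductSpace.toDual ℝ E2).symm.norm_map f).symm
  rw [hn]
  have h2 : ∀ i, f (EuclideanSpace.single i 1) = y i := by
    intro i; rw [hf, EuclideanSpace.inner_single_right]; simp
  simp only [h2]
  rw [EuclideanSpace.norm_eq, Real.sq_sqrt (by positivity)]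
  simp [Real.norm_eq_abs, sq_abs]

lemma contDiff_partial {f : E2 → ℝ} (hf : ContDiff ℝ 2 f) (w : E2) :
    ContDiff ℝ 1 (fun y => fderiv ℝ f y w) := by
  have h1 : ContDiff ℝ 1 (fderiv ℝ f) := hf.fderiv_right (by norm_num)
  exact (ContinuousLinearMap.apply ℝ ℝ w).contDiff.comp h1

lemma diff_partial {f : E2 → ℝ} (hf : ContDiff ℝ 2 f) (w x : E2) :
    DifferentiableAt ℝ (fun y => fderiv ℝ f y w) x :=
  ((contDiff_partial hf w).differentiable one_ne_zero).differentiableAt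

lemma continuous_lap {f : E2 → ℝ} (hf : ContDiff ℝ 2 f) : Continuous (lap f) := by
  unfold lap
  apply continuous_finset_sum
  intro i _
  exact (ContinuousLinearMap.apply ℝ ℝ (EuclideanSpace.single i 1)).continuous.comp
    ((contDiff_partial hf _).continuous_fderiv one_ne_zero)

lemma fderiv_zero_outside {f : E2 → ℝ} {x : E2} (hx : x ∉ tsupport f) : fderiv ℝ f x = 0 := by
  have h : f =ᶠ[nhds x] (fun _ => (0:ℝ)) := notMem_tsupport_iff_eventuallyEq.mp hx
  rw [h.fderiv_eq]; exact fderiv_const_apply 0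

lemma lap_zero_outside {f : E2 → ℝ} {x : E2} (hx : x ∉ tsupport f) : lap f x = 0 := by
  have hop : IsOpen (tsupport f)ᶜ := (isClosed_tsupport f).isOpen_compl
  unfold lap
  apply Finset.sum_eq_zero
  intro i _
  have hev : (fun y => fderiv ℝ f y (EuclideanSpace.single i 1)) =ᶠ[nhds x] (fun _ => (0:ℝ)) := by
    filter_upwards [hop.mem_nhds hx] with y hy
    rw [fderiv_zero_outside hy]; rfl
  rw [hev.fderiv_eq, fderiv_const_apply]; rfl

lemma lap_mul {f g : E2 → ℝ} (hf : ContDiff ℝ 2 f) (hg : ContDiff ℝ 2 g) (x : E2) :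
    lap (fun y => f y * g y) x =
      f x * lap g x + g x * lap f x
        + 2 * ∑ i, (fderiv ℝ f x (EuclideanSpace.single i 1))
            * (fderiv ℝ g x (EuclideanSpace.single i 1)) := by
  have hfd : Differentiable ℝ f := hf.differentiable two_ne_zero
  have hgd : Differentiable ℝ g := hg.differentiable two_ne_zero
  have key : ∀ i : Fin 2,
      fderiv ℝ (fun y => fderiv ℝ (fun z => f z * g z) y (EuclideanSpace.single i 1)) x
        (EuclideanSpace.single i 1)
      = f x * fderiv ℝ (fun y => fderiv ℝ g y (EuclideanSpace.single i 1)) x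
            (EuclideanSpace.single i 1)
        + g x * fderiv ℝ (fun y => fderiv ℝ f y (EuclideanSpace.single i 1)) x
            (EuclideanSpace.single i 1)
        + 2 * ((fderiv ℝ f x (EuclideanSpace.single i 1))
            * (fderiv ℝ g x (EuclideanSpace.single i 1))) := by
    intro i
    set e := EuclideanSpace.single i (1:ℝ)
    have h1 : (fun y => fderiv ℝ (fun z => f z * g z) y e)
        = fun y => f y * (fderiv ℝ g y e) + g y * (fderiv ℝ f y e) := by
      funext y
      rw [fderiv_fun_mul (hfd y) (hgd y)]
      simp only [ContinuousLinearMap.add_apply, ContinuousLinearMap.smul_apply, smul_eq_mul]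
    rw [h1]
    have hF : HasFDerivAt f (fderiv ℝ f x) x := (hfd x).hasFDerivAt
    have hG : HasFDerivAt g (fderiv ℝ g x) x := (hgd x).hasFDerivAt
    have hGi : HasFDerivAt (fun y => fderiv ℝ g y e)
        (fderiv ℝ (fun y => fderiv ℝ g y e) x) x := (diff_partial hg e x).hasFDerivAt
    have hFi : HasFDerivAt (fun y => fderiv ℝ f y e)
        (fderiv ℝ (fun y => fderiv ℝ f y e) x) x := (diff_partial hf e x).hasFDerivAt
    have h2 := ((hF.mul hGi).add (hG.mul hFi)).fderiv
    erw [h2]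
    simp only [ContinuousLinearMap.add_apply, ContinuousLinearMap.smul_apply, smul_eq_mul]
    ring
  unfold lap
  simp only [key]
  rw [Finset.sum_add_distrib, Finset.sum_add_distrib, ← Finset.mul_sum, ← Finset.mul_sum,
    ← Finset.mul_sum]

-- additivity
lemma lap_add {f g : E2 → ℝ} (hf : ContDiff ℝ 2 f) (hg : ContDiff ℝ 2 g) (x : E2) :
    lap (fun y => f y + g y) x = lap f x + lap g x := by
  have hfd : Differentiable ℝ f := hf.differentiable two_ne_zero
  have hgd : Differentiable ℝ g := hg.differentiable two_ne_zero
  unfold lap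
  rw [← Finset.sum_add_distrib]
  apply Finset.sum_congr rfl
  intro i _
  set e := EuclideanSpace.single i (1:ℝ)
  have h1 : (fun y => fderiv ℝ (fun z => f z + g z) y e)
      = fun y => (fderiv ℝ f y e) + (fderiv ℝ g y e) := by
    funext y
    rw [fderiv_fun_add (hfd y) (hgd y)]; rfl
  rw [h1, fderiv_fun_add (diff_partial hf e x) (diff_partial hg e x)]; rfl

-- scaling
lemma lap_comp_smul {ψ : E2 → ℝ} (hψ : ContDiff ℝ 2 ψ) (c : ℝ) (x : E2) :
    lap (fun y => ψ (c • y)) x = c^2 * lap ψ (c • x) := by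
  have hψd : Differentiable ℝ ψ := hψ.differentiable two_ne_zero
  set S : E2 →L[ℝ] E2 := c • ContinuousLinearMap.id ℝ E2 with hS
  have hSd : ∀ y : E2, HasFDerivAt (fun z : E2 => c • z) S y := by
    intro y
    exact S.hasFDerivAt
  unfold lap
  rw [Finset.mul_sum]
  apply Finset.sum_congr rfl
  intro i _
  set e := EuclideanSpace.single i (1:ℝ)
  have h1 : (fun y => fderiv ℝ (fun z => ψ (c • z)) y e)
      = fun y => c * (fderiv ℝ ψ (c • y) e) := by
    funext y
    have h0 : HasFDerivAt (fun z : E2 => ψ (c • z)) ((fderiv ℝ ψ (c • y)).comp S) y :=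
      (hψd (c • y)).hasFDerivAt.comp y (hSd y)
    rw [h0.fderiv]
    simp [hS, smul_eq_mul, mul_comm]
  rw [h1]
  have hg : HasFDerivAt (fun z => fderiv ℝ ψ z e)
      (fderiv ℝ (fun z => fderiv ℝ ψ z e) (c • x)) (c • x) :=
    (diff_partial hψ e (c • x)).hasFDerivAt
  have h2 : HasFDerivAt (fun y : E2 => fderiv ℝ ψ (c • y) e)
      ((fderiv ℝ (fun z => fderiv ℝ ψ z e) (c • x)).comp S) x := hg.comp x (hSd x)
  have h3 := (h2.const_mul c).fderiv
  rw [h3]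
  simp [hS, smul_eq_mul]
  ring

lemma coord_le_norm (p : E2) (i : Fin 2) : |p i| ≤ ‖p‖ := by
  rw [EuclideanSpace.norm_eq]
  have h1 : |p i| = Real.sqrt (‖p i‖^2) := by
    rw [Real.sqrt_sq_eq_abs]; simp [Real.norm_eq_abs, abs_abs]
  rw [h1]
  apply Real.sqrt_le_sqrt
  exact Finset.single_le_sum (f := fun j => ‖p j‖^2) (fun j _ => by positivity) (Finset.mem_univ i)

lemma integral_div_zero (f : Fin 2 → E2 → ℝ) (hf : ∀ i, ContDiff ℝ 1 (f i))
    (hsupp : ∀ i, HasCompactSupport (f i)) :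
    ∫ x : E2, ∑ i, fderiv ℝ (f i) x (EuclideanSpace.single i 1) = 0 := by
  -- a radius containing all supports
  obtain ⟨R₀, hR₀⟩ : ∃ R₀ : ℝ, ∀ i, tsupport (f i) ⊆ closedBall 0 R₀ := by
    obtain ⟨r0, h0⟩ := ((hsupp 0).isBounded).subset_closedBall 0
    obtain ⟨r1, h1⟩ := ((hsupp 1).isBounded).subset_closedBall 0
    refine ⟨max r0 r1, fun i => ?_⟩
    fin_cases i
    · exact h0.trans (closedBall_subset_closedBall (le_max_left _ _))
    · exact h1.trans (closedBall_subset_closedBall (le_max_right _ _))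
  set R := max R₀ 0 + 1 with hR
  have hRpos : 0 < R := by positivity
  have hout : ∀ (i) (z : E2), R ≤ ‖z‖ → z ∉ tsupport (f i) := by
    intro i z hz hmem
    have := mem_closedBall_iff_norm.mp (hR₀ i hmem)
    simp only [sub_zero] at this
    have : ‖z‖ ≤ R₀ := this
    nlinarith [le_max_left R₀ 0]
  -- transfer to the pi type
  set L : E2 ≃L[ℝ] (Fin 2 → ℝ) := EuclideanSpace.equiv (Fin 2) ℝ with hL
  set g : Fin 2 → (Fin 2 → ℝ) → ℝ := fun i y => f i (L.symm y) with hg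
  set g' : Fin 2 → (Fin 2 → ℝ) → ((Fin 2 → ℝ) →L[ℝ] ℝ) :=
    fun i y => (fderiv ℝ (f i) (L.symm y)).comp (L.symm : (Fin 2 → ℝ) →L[ℝ] E2) with hg'
  have hder : ∀ (y : Fin 2 → ℝ) (i : Fin 2), HasFDerivAt (g i) (g' i y) y := by
    intro y i
    exact (((hf i).differentiable one_ne_zero (L.symm y)).hasFDerivAt).comp y L.symm.hasFDerivAt
  have hsingle : ∀ (i : Fin 2) (y : Fin 2 → ℝ),
      g' i y (Pi.single i 1) = fderiv ℝ (f i) (L.symm y) (EuclideanSpace.single i 1) := by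
    intro i y; rfl
  have hcontd : ∀ i, Continuous (fun y : Fin 2 → ℝ => g' i y (Pi.single i 1)) := by
    intro i
    simp only [hsingle]
    exact ((ContinuousLinearMap.apply ℝ ℝ (EuclideanSpace.single i (1:ℝ))).continuous.comp
      ((hf i).continuous_fderiv one_ne_zero)).comp L.symm.continuous
  set a : Fin 2 → ℝ := fun _ => -R with ha
  set b : Fin 2 → ℝ := fun _ => R with hb
  have hab : a ≤ b := fun i => by simp [ha, hb]; linarith
  have hdiv := integral_divergence_of_hasFDerivAt_off_countable' (n := 1) a b hab
    g g' ∅ countable_empty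
    (fun i => (((hf i).continuous).comp L.symm.continuous).continuousOn)
    (fun x _ i => hder x i)
    (((continuous_finset_sum _ (fun i _ => hcontd i)).continuousOn).integrableOn_compact
      isCompact_Icc)
  -- boundary terms vanish
  have hface : ∀ (i : Fin 2) (c : ℝ), R ≤ |c| →
      ∀ x : Fin 1 → ℝ, g i (i.insertNth c x) = 0 := by
    intro i c hc x
    have hnorm : R ≤ ‖L.symm (i.insertNth c x)‖ := by
      have := coord_le_norm (L.symm (i.insertNth c x)) i
      have hcoord : (L.symm (i.insertNth c x) : Fin 2 → ℝ) i = c := by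
        show (i.insertNth c x : Fin 2 → ℝ) i = c
        simp
      rw [← hcoord] at hc
      exact le_trans hc this
    exact (image_eq_zero_of_notMem_tsupport (hout i _ hnorm) : f i (L.symm (i.insertNth c x)) = 0)
  have hRHS : ∀ i : Fin 2,
      ((∫ (x : Fin 1 → ℝ) in Set.Icc (a ∘ i.succAbove) (b ∘ i.succAbove), g i (i.insertNth (b i) x)) -
        ∫ (x : Fin 1 → ℝ) in Set.Icc (a ∘ i.succAbove) (b ∘ i.succAbove), g i (i.insertNth (a i) x)) = 0 := by
    intro i
    have h1 : (fun x : Fin 1 → ℝ => g i (i.insertNth (b i) x)) = fun _ => 0 := by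
      funext x; exact hface i (b i) (by show R ≤ |R|; exact le_abs_self R) x
    have h2 : (fun x : Fin 1 → ℝ => g i (i.insertNth (a i) x)) = fun _ => 0 := by
      funext x; exact hface i (a i) (by show R ≤ |-R|; rw [abs_neg]; exact le_abs_self R) x
    rw [h1, h2]
    simp
  rw [Finset.sum_congr rfl (fun i _ => hRHS i), Finset.sum_const, smul_zero] at hdiv
  -- extend LHS from the box to the whole space
  have hext : ∀ x : Fin 2 → ℝ, x ∉ Set.Icc a b →
      (∑ i : Fin 2, g' i x (Pi.single i 1)) = 0 := by
    intro x hx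
    have : ∃ j, R < |x j| := by
      by_contra hcon
      push_neg at hcon
      exact hx ⟨fun j => by have := hcon j; rw [abs_le] at this; simpa [ha] using this.1,
        fun j => by have := hcon j; rw [abs_le] at this; simpa [hb] using this.2⟩
    obtain ⟨j, hj⟩ := this
    have hnorm : R ≤ ‖L.symm x‖ := by
      have h1 := coord_le_norm (L.symm x) j
      have : (L.symm x : Fin 2 → ℝ) j = x j := rfl
      rw [this] at h1
      linarith
    apply Finset.sum_eq_zero
    intro i _
    rw [hsingle]
    rw [fderiv_zero_outside (hout i _ hnorm)]
    rfl
  rw [setIntegral_eq_integral_of_forall_compl_eq_zero hext] at hdiv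
  -- transfer the integral from pi to E2
  have htrans := (EuclideanSpace.volume_preserving_symm_measurableEquiv_toLp (Fin 2)).integral_comp
    (MeasurableEquiv.toLp 2 (Fin 2 → ℝ)).symm.measurableEmbedding
    (fun y => ∑ i : Fin 2, g' i y (Pi.single i 1))
  rw [hdiv] at htrans
  rw [← htrans]
  rfl

lemma hasCompactSupport_lap {φ : E2 → ℝ} (hs : HasCompactSupport φ) :
    HasCompactSupport (lap φ) :=
  HasCompactSupport.intro hs (fun x hx => lap_zero_outside hx)

lemma green {w φ : E2 → ℝ} (hw : ContDiff ℝ 2 w) (hφ : ContDiff ℝ 2 φ)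
    (hs : HasCompactSupport φ) :
    ∫ x : E2, φ x * lap w x = ∫ x : E2, w x * lap φ x := by
  have hwd : Differentiable ℝ w := hw.differentiable two_ne_zero
  have hφd : Differentiable ℝ φ := hφ.differentiable two_ne_zero
  set W : Fin 2 → E2 → ℝ := fun i y => fderiv ℝ w y (EuclideanSpace.single i 1) with hW
  set P : Fin 2 → E2 → ℝ := fun i y => fderiv ℝ φ y (EuclideanSpace.single i 1) with hP
  set f : Fin 2 → E2 → ℝ := fun i y => φ y * W i y - w y * P i y with hfdef
  have hf1 : ∀ i, ContDiff ℝ 1 (f i) := by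
    intro i
    exact ((hφ.of_le one_le_two).mul (contDiff_partial hw _)).sub
      ((hw.of_le one_le_two).mul (contDiff_partial hφ _))
  have hfs : ∀ i, HasCompactSupport (f i) := by
    intro i
    apply HasCompactSupport.intro hs
    intro x hx
    have h1 : φ x = 0 := image_eq_zero_of_notMem_tsupport hx
    have h2 : P i x = 0 := by
      simp only [hP]
      rw [fderiv_zero_outside hx]; rfl
    simp [hfdef, h1, h2]
  have hdiv : ∀ x : E2, (∑ i, fderiv ℝ (f i) x (EuclideanSpace.single i 1))
      = φ x * lap w x - w x * lap φ x := by
    intro x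
    have key : ∀ i : Fin 2, fderiv ℝ (f i) x (EuclideanSpace.single i 1)
        = (φ x * fderiv ℝ (fun y => W i y) x (EuclideanSpace.single i 1)
            - w x * fderiv ℝ (fun y => P i y) x (EuclideanSpace.single i 1)) := by
      intro i
      set e := EuclideanSpace.single i (1:ℝ)
      have hφx : HasFDerivAt φ (fderiv ℝ φ x) x := (hφd x).hasFDerivAt
      have hwx : HasFDerivAt w (fderiv ℝ w x) x := (hwd x).hasFDerivAt
      have hWx : HasFDerivAt (W i) (fderiv ℝ (W i) x) x := (diff_partial hw e x).hasFDerivAt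
      have hPx : HasFDerivAt (P i) (fderiv ℝ (P i) x) x := (diff_partial hφ e x).hasFDerivAt
      have h2 := ((hφx.mul hWx).sub (hwx.mul hPx)).fderiv
      show fderiv ℝ (fun y => φ y * W i y - w y * P i y) x e = _
      erw [h2]
      simp only [ContinuousLinearMap.coe_sub', Pi.sub_apply, ContinuousLinearMap.add_apply,
        ContinuousLinearMap.smul_apply, smul_eq_mul]
      show φ x * fderiv ℝ (W i) x e + W i x * (fderiv ℝ φ x e)
          - (w x * fderiv ℝ (P i) x e + P i x * (fderiv ℝ w x e)) = _
      have hPe : fderiv ℝ φ x e = P i x := rfl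
      have hWe : fderiv ℝ w x e = W i x := rfl
      rw [hPe, hWe]
      ring
    rw [Finset.sum_congr rfl (fun i _ => key i), Finset.sum_sub_distrib,
      ← Finset.mul_sum, ← Finset.mul_sum]
    rfl
  have h0 : ∫ x : E2, (φ x * lap w x - w x * lap φ x) = 0 := by
    rw [← integral_congr_ae (Filter.Eventually.of_forall hdiv)]
    exact integral_div_zero f hf1 hfs
  have i1 : Integrable (fun x : E2 => φ x * lap w x) :=
    Continuous.integrable_of_hasCompactSupport
      (hφ.continuous.mul (continuous_lap hw)) (hs.mul_right)
  have i2 : Integrable (fun x : E2 => w x * lap φ x) :=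
    Continuous.integrable_of_hasCompactSupport
      (hw.continuous.mul (continuous_lap hφ)) ((hasCompactSupport_lap hs).mul_left)
  have := integral_sub i1 i2
  rw [h0] at this
  linarith

end Helpers

section Main
open Metric Set

/-- For a solution with linear growth, the Dirichlet energy on the ball of radius `r`
grows at most like `r²`. -/
theorem dirichlet_energy_quadratic_bound (u v : E2 → ℝ) (hsol : IsSol u v)
    (C₀ : ℝ) (hC₀ : 0 < C₀) (hgrowth : ∀ x : E2, u x + v x ≤ C₀ * (1 + ‖x‖)) :
    ∃ C : ℝ, 0 < C ∧ ∀ r : ℝ, 1 ≤ r →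
      (∫ x in Metric.ball (0 : E2) r, (‖fderiv ℝ u x‖ ^ 2 + ‖fderiv ℝ v x‖ ^ 2))
        ≤ C * r ^ 2 := by
  obtain ⟨hu2, hv2, hupos, hvpos, hequ, heqv⟩ := hsol
  set w : E2 → ℝ := fun x => u x * u x + v x * v x with hwdef
  have hw2 : ContDiff ℝ 2 w := (hu2.mul hu2).add (hv2.mul hv2)
  set F : E2 → ℝ := fun x => ‖fderiv ℝ u x‖ ^ 2 + ‖fderiv ℝ v x‖ ^ 2 with hFdef
  have hFc : Continuous F := by
    apply Continuous.add
    · exact ((hu2.continuous_fderiv two_ne_zero).norm.pow 2)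
    · exact ((hv2.continuous_fderiv two_ne_zero).norm.pow 2)
  have hFnn : ∀ x, 0 ≤ F x := fun x => by positivity
  have hlapw : ∀ x, lap w x = 2 * F x + 4 * (u x ^ 2 * v x ^ 2) := by
    intro x
    have h1 : lap w x = lap (fun y => u y * u y) x + lap (fun y => v y * v y) x := by
      rw [hwdef]
      exact lap_add (hu2.mul hu2) (hv2.mul hv2) x
    rw [h1, lap_mul hu2 hu2 x, lap_mul hv2 hv2 x, hequ x, heqv x, hFdef]
    simp only [norm_clm_sq (fderiv ℝ u x), norm_clm_sq (fderiv ℝ v x)]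
    have hsqu : ∀ i : Fin 2, (fderiv ℝ u x (EuclideanSpace.single i 1))
        * (fderiv ℝ u x (EuclideanSpace.single i 1))
        = (fderiv ℝ u x (EuclideanSpace.single i 1))^2 := fun i => (sq _).symm
    have hsqv : ∀ i : Fin 2, (fderiv ℝ v x (EuclideanSpace.single i 1))
        * (fderiv ℝ v x (EuclideanSpace.single i 1))
        = (fderiv ℝ v x (EuclideanSpace.single i 1))^2 := fun i => (sq _).symm
    rw [Finset.sum_congr rfl (fun i _ => hsqu i), Finset.sum_congr rfl (fun i _ => hsqv i)]
    ring
  have hwnn : ∀ x, 0 ≤ w x := fun x => by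
    have := hupos x; have := hvpos x
    show (0:ℝ) ≤ u x * u x + v x * v x
    nlinarith
  have hlapwnn : ∀ x, 0 ≤ lap w x := fun x => by
    rw [hlapw x]; have := hFnn x; positivity
  have hwb : ∀ x, w x ≤ (C₀ * (1 + ‖x‖)) ^ 2 := by
    intro x
    have h1 := hgrowth x
    have h2 := hupos x
    have h3 := hvpos x
    have h5 : (0:ℝ) ≤ u x + v x := by linarith
    have h4 : (u x + v x) * (u x + v x) ≤ (C₀ * (1 + ‖x‖)) * (C₀ * (1 + ‖x‖)) :=
      mul_le_mul h1 h1 h5 (le_trans h5 h1)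
    show u x * u x + v x * v x ≤ (C₀ * (1 + ‖x‖)) ^ 2
    nlinarith [mul_pos h2 h3]
  -- the bump function
  set ψbump : ContDiffBump (0 : E2) := ⟨1, 2, one_pos, one_lt_two⟩ with hψb
  set ψ : E2 → ℝ := fun x => ψbump x with hψdef
  have hψc : ContDiff ℝ 2 ψ := by
    have := ψbump.contDiff (n := 2)
    exact_mod_cast this
  have hψsupp : HasCompactSupport ψ := ψbump.hasCompactSupport
  obtain ⟨K, hK⟩ := (continuous_lap hψc).bounded_above_of_compact_support
    (hasCompactSupport_lap hψsupp)
  have hK0 : (0:ℝ) ≤ K := le_trans (norm_nonneg _) (hK 0)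
  set B : ℝ := (volume (Metric.ball (0 : E2) 1)).toReal with hBdef
  have hB0 : 0 ≤ B := ENNReal.toReal_nonneg
  refine ⟨18 * C₀ ^ 2 * K * B + 1, by nlinarith [sq_nonneg C₀, mul_nonneg (mul_nonneg (mul_nonneg (by norm_num : (0:ℝ) ≤ 18) (sq_nonneg C₀)) hK0) hB0], ?_⟩
  intro r hr
  have hr0 : (0:ℝ) < r := lt_of_lt_of_le one_pos hr
  set φ : E2 → ℝ := fun x => ψ (r⁻¹ • x) with hφdef
  have hφ2 : ContDiff ℝ 2 φ := hψc.comp ((((r:ℝ)⁻¹) • ContinuousLinearMap.id ℝ E2).contDiff)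
  have hnorm_smul : ∀ x : E2, ‖r⁻¹ • x‖ = r⁻¹ * ‖x‖ := by
    intro x
    rw [norm_smul, Real.norm_eq_abs, abs_of_pos (inv_pos.mpr hr0)]
  have hsuppφ : Function.support φ ⊆ Metric.closedBall 0 (2 * r) := by
    intro x hx
    rw [Function.mem_support] at hx
    have h1 : r⁻¹ • x ∈ Function.support (fun y => ψbump y) := hx
    rw [ψbump.support_eq] at h1
    have h2 : ‖r⁻¹ • x‖ < 2 := by simpa [Metric.mem_ball] using h1
    rw [hnorm_smul] at h2
    rw [Metric.mem_closedBall, dist_zero_right]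
    calc ‖x‖ = r * (r⁻¹ * ‖x‖) := by field_simp
    _ ≤ r * 2 := by nlinarith [norm_nonneg x]
    _ = 2 * r := by ring
  have htsuppφ : tsupport φ ⊆ Metric.closedBall 0 (2 * r) :=
    closure_minimal hsuppφ Metric.isClosed_closedBall
  have hφsupp : HasCompactSupport φ :=
    HasCompactSupport.intro (isCompact_closedBall 0 (2 * r))
      (fun x hx => by
        by_contra hne
        exact hx (hsuppφ (Function.mem_support.mpr hne)))
  have hφ1 : ∀ x ∈ Metric.ball (0 : E2) r, φ x = 1 := by
    intro x hx
    rw [Metric.mem_ball, dist_zero_right] at hx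
    apply ψbump.one_of_mem_closedBall
    rw [Metric.mem_closedBall, dist_zero_right, hnorm_smul]
    calc r⁻¹ * ‖x‖ ≤ r⁻¹ * r := by
          apply mul_le_mul_of_nonneg_left (le_of_lt hx) (le_of_lt (inv_pos.mpr hr0))
    _ = 1 := inv_mul_cancel₀ (ne_of_gt hr0)
  have hφnn : ∀ x, 0 ≤ φ x := fun x => ψbump.nonneg
  have hlapφ' : ∀ x, r ^ 2 * |lap φ x| ≤ K := by
    intro x
    have hsc : lap φ x = (r⁻¹) ^ 2 * lap ψ (r⁻¹ • x) := by
      rw [hφdef]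
      exact lap_comp_smul hψc r⁻¹ x
    rw [hsc, abs_mul, abs_of_nonneg (by positivity : (0:ℝ) ≤ (r⁻¹)^2)]
    have h1 : |lap ψ (r⁻¹ • x)| ≤ K := by
      have := hK (r⁻¹ • x); rwa [Real.norm_eq_abs] at this
    calc r ^ 2 * ((r⁻¹) ^ 2 * |lap ψ (r⁻¹ • x)|) = |lap ψ (r⁻¹ • x)| := by
          field_simp
    _ ≤ K := h1
  -- the chain of inequalities
  have IF : IntegrableOn F (Metric.ball (0:E2) r) :=
    (hFc.continuousOn.integrableOn_compact (isCompact_closedBall (0:E2) r)).mono_set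
      Metric.ball_subset_closedBall
  have IL : IntegrableOn (fun x => lap w x / 2) (Metric.ball (0:E2) r) :=
    (((continuous_lap hw2).div_const 2).continuousOn.integrableOn_compact
      (isCompact_closedBall (0:E2) r)).mono_set Metric.ball_subset_closedBall
  have step1 : ∫ x in Metric.ball (0:E2) r, F x ≤ ∫ x in Metric.ball (0:E2) r, lap w x / 2 := by
    apply setIntegral_mono_on IF IL measurableSet_ball
    intro x _
    rw [hlapw x]
    nlinarith [hFnn x, sq_nonneg (u x * v x), sq_nonneg (u x), sq_nonneg (v x), mul_nonneg (sq_nonneg (u x)) (sq_nonneg (v x))]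
  have Iφl : Integrable (fun x : E2 => φ x * lap w x) :=
    Continuous.integrable_of_hasCompactSupport
      (hφ2.continuous.mul (continuous_lap hw2)) (hφsupp.mul_right)
  have step2 : ∫ x in Metric.ball (0:E2) r, lap w x
      = ∫ x in Metric.ball (0:E2) r, φ x * lap w x := by
    apply setIntegral_congr_fun measurableSet_ball
    intro x hx
    show lap w x = φ x * lap w x
    rw [hφ1 x hx, one_mul]
  have step2c : ∫ x in Metric.ball (0:E2) r, φ x * lap w x ≤ ∫ x : E2, φ x * lap w x :=
    setIntegral_le_integral Iφl (Filter.Eventually.of_forall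
      (fun x => mul_nonneg (hφnn x) (hlapwnn x)))
  have step3 : ∫ x : E2, φ x * lap w x = ∫ x : E2, w x * lap φ x := green hw2 hφ2 hφsupp
  have step4 : ∫ x : E2, w x * lap φ x
      = ∫ x in Metric.closedBall (0:E2) (2*r), w x * lap φ x := by
    symm
    apply setIntegral_eq_integral_of_forall_compl_eq_zero
    intro x hx
    rw [lap_zero_outside (fun hmem => hx (htsuppφ hmem))]
    ring
  have step5 : ∫ x in Metric.closedBall (0:E2) (2*r), w x * lap φ x
      ≤ ∫ _x in Metric.closedBall (0:E2) (2*r), (9 * C₀ ^ 2 * K : ℝ) := by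
    apply setIntegral_mono_on
    · exact (hw2.continuous.mul (continuous_lap hφ2)).continuousOn.integrableOn_compact
        (isCompact_closedBall (0:E2) (2*r))
    · exact integrableOn_const measure_closedBall_lt_top.ne
    · exact measurableSet_closedBall
    · intro x hx
      rw [Metric.mem_closedBall, dist_zero_right] at hx
      show w x * lap φ x ≤ 9 * C₀ ^ 2 * K
      have e1 : w x * lap φ x ≤ w x * |lap φ x| :=
        mul_le_mul_of_nonneg_left (le_abs_self _) (hwnn x)
      have e2 : w x * |lap φ x| ≤ (C₀ * (1 + ‖x‖)) ^ 2 * |lap φ x| :=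
        mul_le_mul_of_nonneg_right (hwb x) (abs_nonneg _)
      have h1n : 1 + ‖x‖ ≤ 3 * r := by linarith [norm_nonneg x]
      have e3 : (C₀ * (1 + ‖x‖)) ^ 2 ≤ (3 * C₀ * r) ^ 2 := by
        have hnn : (0:ℝ) ≤ C₀ * (1 + ‖x‖) := mul_nonneg hC₀.le (by positivity)
        have h2n := pow_le_pow_left₀ hnn (mul_le_mul_of_nonneg_left h1n hC₀.le) 2
        calc (C₀ * (1 + ‖x‖)) ^ 2 ≤ (C₀ * (3 * r)) ^ 2 := h2n
        _ = (3 * C₀ * r) ^ 2 := by ring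
      have e4 : (C₀ * (1 + ‖x‖)) ^ 2 * |lap φ x| ≤ (3 * C₀ * r) ^ 2 * |lap φ x| :=
        mul_le_mul_of_nonneg_right e3 (abs_nonneg _)
      have e5 : (3 * C₀ * r) ^ 2 * |lap φ x| = 9 * C₀ ^ 2 * (r ^ 2 * |lap φ x|) := by ring
      have e6 : 9 * C₀ ^ 2 * (r ^ 2 * |lap φ x|) ≤ 9 * C₀ ^ 2 * K :=
        mul_le_mul_of_nonneg_left (hlapφ' x) (by positivity)
      linarith
  have step6 : ∫ _x in Metric.closedBall (0:E2) (2*r), (9 * C₀ ^ 2 * K : ℝ)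
      = (2*r)^2 * B * (9 * C₀ ^ 2 * K) := by
    rw [setIntegral_const, smul_eq_mul]
    congr 1
    rw [measureReal_def]
    rw [Measure.addHaar_closedBall volume (0:E2) (by positivity : (0:ℝ) ≤ 2*r)]
    rw [ENNReal.toReal_mul, ENNReal.toReal_ofReal (by positivity)]
    congr 2
    simp [finrank_euclideanSpace_fin]
  have hdiv2 : ∫ x in Metric.ball (0:E2) r, lap w x / 2
      = (∫ x in Metric.ball (0:E2) r, lap w x) / 2 := integral_div 2 _
  have final : ∫ x in Metric.ball (0:E2) r, F x ≤ 18 * C₀ ^ 2 * K * B * r ^ 2 := by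
    have h := step1
    rw [hdiv2, step2] at h
    have h2 : (∫ x in Metric.ball (0:E2) r, φ x * lap w x) / 2
        ≤ ((2*r)^2 * B * (9 * C₀ ^ 2 * K)) / 2 := by
      have := le_trans step2c (le_of_eq step3)
      have := le_trans this (le_of_eq step4)
      have := le_trans this step5
      rw [step6] at this
      linarith
    calc ∫ x in Metric.ball (0:E2) r, F x ≤ _ := h
    _ ≤ ((2*r)^2 * B * (9 * C₀ ^ 2 * K)) / 2 := h2
    _ = 18 * C₀ ^ 2 * K * B * r ^ 2 := by ring
  have hrsq : (0:ℝ) < r ^ 2 := by positivity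
  calc ∫ x in Metric.ball (0:E2) r, (‖fderiv ℝ u x‖ ^ 2 + ‖fderiv ℝ v x‖ ^ 2)
      = ∫ x in Metric.ball (0:E2) r, F x := rfl
  _ ≤ 18 * C₀ ^ 2 * K * B * r ^ 2 := final
  _ ≤ (18 * C₀ ^ 2 * K * B + 1) * r ^ 2 := by nlinarith

end Main
end
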